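/- Let M and N be commuting square matrices (over ℂ) with spectral radius less than 1, and define f(M,N) := Σ_{n=2}^∞ ((−1)^{n+1}/n) Σ_{k=1}^{n−1} M^k N^{n−k}. If M − N is invertible, then f(M,N) = (M − N)^{-1} [ N·log(I + M) − M·log(I + N) ], where log(I + X) := Σ_{n≥1} (−1)^{n+1} Xⁿ/n. -/

import Mathlib

open scoped BigOperators

noncomputable section

/-- log(I + X) := Σ_{n≥1} (−1)^{n+1} Xⁿ/n for square complex matrices. -/
def matLog {d : ℕ} (X : Matrix (Fin d) (Fin d) ℂ) : Matrix (Fin d) (Fin d) ℂ :=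
  ∑' n : ℕ, if 1 ≤ n then (((-1 : ℂ) ^ (n + 1) / n) • X ^ n) else 0

/-- f(M,N) := Σ_{n=2}^∞ ((−1)^{n+1}/n) Σ_{k=1}^{n−1} M^k N^{n−k}. -/
def fMN {d : ℕ} (M N : Matrix (Fin d) (Fin d) ℂ) : Matrix (Fin d) (Fin d) ℂ :=
  ∑' n : ℕ, if 2 ≤ n then
    (((-1 : ℂ) ^ (n + 1) / n) • ∑ k ∈ Finset.Ico 1 n, M ^ k * N ^ (n - k)) else 0

open scoped NNReal ENNReal

section aux

attribute [local instance] Matrix.linftyOpNormedRing Matrix.linftyOpNormedAlgebra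

lemma aux_geom_bound {d : ℕ} (A : Matrix (Fin d) (Fin d) ℂ)
    (hA : spectralRadius ℂ A < 1) :
    ∃ r C : ℝ, 0 < r ∧ r < 1 ∧ 1 ≤ C ∧ ∀ n : ℕ, ‖A ^ n‖ ≤ C * r ^ n := by
  obtain ⟨r₀, hρ, hr₀1⟩ := ENNReal.lt_iff_exists_nnreal_btwn.mp hA
  set r : ℝ≥0 := max r₀ (1/2) with hrdef
  have hρr : spectralRadius ℂ A < (r : ℝ≥0∞) := lt_of_lt_of_le hρ (by exact_mod_cast le_max_left _ _)
  have hr1 : (r : ℝ≥0∞) < 1 := by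
    have : r < 1 := by
      apply max_lt
      · exact_mod_cast hr₀1
      · rw [← NNReal.coe_lt_coe]; norm_num
    exact_mod_cast this
  have hr0 : (0:ℝ) < r := by
    have : (1/2 : ℝ≥0) ≤ r := le_max_right _ _
    have := (NNReal.coe_le_coe.mpr this)
    norm_num at this
    linarith
  have hrlt1 : (r:ℝ) < 1 := by exact_mod_cast hr1
  have hten := spectrum.pow_nnnorm_pow_one_div_tendsto_nhds_spectralRadius A
  have hev : ∀ᶠ n : ℕ in Filter.atTop, (‖A ^ n‖₊ : ℝ≥0∞) ^ (1 / (n:ℝ)) < (r : ℝ≥0∞) :=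
    hten.eventually_lt_const hρr
  obtain ⟨N₀, hN₀⟩ := Filter.eventually_atTop.mp hev
  set K := max N₀ 1 with hK
  have hgeo : ∀ n, K ≤ n → ‖A ^ n‖ ≤ (r:ℝ) ^ n := by
    intro n hn
    have hn1 : 1 ≤ n := le_trans (le_max_right _ _) hn
    have h1 := hN₀ n (le_trans (le_max_left _ _) hn)
    have hne : (n:ℝ) ≠ 0 := by positivity
    have h2 : (‖A ^ n‖₊ : ℝ≥0∞) < (r : ℝ≥0∞) ^ (n:ℕ) := by
      calc (‖A ^ n‖₊ : ℝ≥0∞) = ((‖A ^ n‖₊ : ℝ≥0∞) ^ (1/(n:ℝ))) ^ (n:ℝ) := by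
            rw [← ENNReal.rpow_mul, one_div, inv_mul_cancel₀ hne, ENNReal.rpow_one]
        _ < (r : ℝ≥0∞) ^ (n:ℝ) := by
            apply ENNReal.rpow_lt_rpow h1 (by positivity)
        _ = (r : ℝ≥0∞) ^ (n:ℕ) := by rw [ENNReal.rpow_natCast]
    have h3 : (‖A ^ n‖₊ : ℝ≥0∞) < ((r ^ n : ℝ≥0) : ℝ≥0∞) := by rwa [ENNReal.coe_pow]
    have h4 : ‖A ^ n‖₊ < r ^ n := by exact_mod_cast h3
    have := (NNReal.coe_lt_coe.mpr h4).le
    simpa using this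
  refine ⟨r, 1 + ∑ k ∈ Finset.range K, ‖A ^ k‖ / (r:ℝ) ^ k, hr0, hrlt1, ?_, ?_⟩
  · have : 0 ≤ ∑ k ∈ Finset.range K, ‖A ^ k‖ / (r:ℝ) ^ k :=
      Finset.sum_nonneg fun k _ => div_nonneg (norm_nonneg _) (by positivity)
    linarith
  · intro n
    by_cases hc : K ≤ n
    · have := hgeo n hc
      have hC : (1:ℝ) ≤ 1 + ∑ k ∈ Finset.range K, ‖A ^ k‖ / (r:ℝ) ^ k := by
        have : 0 ≤ ∑ k ∈ Finset.range K, ‖A ^ k‖ / (r:ℝ) ^ k :=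
          Finset.sum_nonneg fun k _ => div_nonneg (norm_nonneg _) (by positivity)
        linarith
      nlinarith [pow_nonneg hr0.le n]
    · push_neg at hc
      have hmem : n ∈ Finset.range K := Finset.mem_range.mpr hc
      have hle : ‖A ^ n‖ / (r:ℝ) ^ n ≤ ∑ k ∈ Finset.range K, ‖A ^ k‖ / (r:ℝ) ^ k :=
        Finset.single_le_sum (fun k _ => div_nonneg (norm_nonneg _) (by positivity)) hmem
      have hrn : (0:ℝ) < (r:ℝ) ^ n := by positivity
      rw [div_le_iff₀ hrn] at hle
      nlinarith [pow_nonneg hr0.le n]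

attribute [local instance] Matrix.linftyOpNormedRing Matrix.linftyOpNormedAlgebra

lemma aux_summable_log {d : ℕ} (A : Matrix (Fin d) (Fin d) ℂ)
    (r C : ℝ) (hr0 : 0 < r) (hr1 : r < 1) (hC : 1 ≤ C)
    (hb : ∀ n : ℕ, ‖A ^ n‖ ≤ C * r ^ n) :
    Summable (fun n : ℕ => if 1 ≤ n then (((-1 : ℂ) ^ (n + 1) / n) • A ^ n) else 0) := by
  apply Summable.of_norm_bounded ((summable_geometric_of_lt_one hr0.le hr1).mul_left C)
  intro n
  by_cases hn : 1 ≤ n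
  · rw [if_pos hn, norm_smul]
    have hcn : ‖((-1 : ℂ) ^ (n + 1) / n)‖ ≤ 1 := by
      rw [norm_div, norm_pow, norm_neg, norm_one, one_pow]
      rw [Complex.norm_natCast]
      rw [div_le_one (by exact_mod_cast hn)]
      exact_mod_cast hn
    calc ‖((-1 : ℂ) ^ (n + 1) / n)‖ * ‖A ^ n‖ ≤ 1 * (C * r ^ n) := by
          apply mul_le_mul hcn (hb n) (norm_nonneg _) (by norm_num)
      _ = C * r ^ n := one_mul _
  · rw [if_neg hn, norm_zero]
    positivity

lemma aux_summable_f {d : ℕ} (M N : Matrix (Fin d) (Fin d) ℂ)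
    (r CM CN : ℝ) (hr0 : 0 < r) (hr1 : r < 1) (hCM : 1 ≤ CM) (hCN : 1 ≤ CN)
    (hbM : ∀ n : ℕ, ‖M ^ n‖ ≤ CM * r ^ n) (hbN : ∀ n : ℕ, ‖N ^ n‖ ≤ CN * r ^ n) :
    Summable (fun n : ℕ => if 2 ≤ n then
      (((-1 : ℂ) ^ (n + 1) / n) • ∑ k ∈ Finset.Ico 1 n, M ^ k * N ^ (n - k)) else 0) := by
  apply Summable.of_norm_bounded
    ((summable_geometric_of_lt_one hr0.le hr1).mul_left (CM * CN))
  intro n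
  by_cases hn : 2 ≤ n
  · rw [if_pos hn, norm_smul]
    have hn0 : (0:ℝ) < n := by positivity
    have hcn : ‖((-1 : ℂ) ^ (n + 1) / n)‖ = 1 / n := by
      rw [norm_div, norm_pow, norm_neg, norm_one, one_pow, Complex.norm_natCast]
    have hterm : ∀ k ∈ Finset.Ico 1 n, ‖M ^ k * N ^ (n - k)‖ ≤ CM * CN * r ^ n := by
      intro k hk
      obtain ⟨hk1, hk2⟩ := Finset.mem_Ico.mp hk
      calc ‖M ^ k * N ^ (n - k)‖ ≤ ‖M ^ k‖ * ‖N ^ (n - k)‖ := norm_mul_le _ _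
        _ ≤ (CM * r ^ k) * (CN * r ^ (n - k)) := by
            apply mul_le_mul (hbM k) (hbN (n - k)) (norm_nonneg _) (by positivity)
        _ = CM * CN * (r ^ k * r ^ (n - k)) := by ring
        _ = CM * CN * r ^ n := by
            have hkn : k + (n - k) = n := by omega
            rw [← pow_add, hkn]
    have hsum : ‖∑ k ∈ Finset.Ico 1 n, M ^ k * N ^ (n - k)‖ ≤ (n:ℝ) * (CM * CN * r ^ n) := by
      calc ‖∑ k ∈ Finset.Ico 1 n, M ^ k * N ^ (n - k)‖
          ≤ ∑ k ∈ Finset.Ico 1 n, ‖M ^ k * N ^ (n - k)‖ := norm_sum_le _ _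
        _ ≤ ∑ _k ∈ Finset.Ico 1 n, CM * CN * r ^ n := Finset.sum_le_sum hterm
        _ = ((n - 1 : ℕ) : ℝ) * (CM * CN * r ^ n) := by
            rw [Finset.sum_const, Nat.card_Ico, nsmul_eq_mul]
        _ ≤ (n:ℝ) * (CM * CN * r ^ n) := by
            apply mul_le_mul_of_nonneg_right _ (by positivity)
            exact_mod_cast Nat.sub_le n 1
    calc ‖((-1 : ℂ) ^ (n + 1) / n)‖ * ‖∑ k ∈ Finset.Ico 1 n, M ^ k * N ^ (n - k)‖
        ≤ (1 / n) * ((n:ℝ) * (CM * CN * r ^ n)) := by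
          rw [hcn]
          apply mul_le_mul_of_nonneg_left hsum (by positivity)
      _ = CM * CN * r ^ n := by field_simp
  · rw [if_neg hn, norm_zero]
    positivity

lemma aux_summables {d : ℕ} (M N : Matrix (Fin d) (Fin d) ℂ)
    (hM : spectralRadius ℂ M < 1) (hN : spectralRadius ℂ N < 1) :
    Summable (fun n : ℕ => if 1 ≤ n then (((-1 : ℂ) ^ (n + 1) / n) • M ^ n) else 0) ∧
    Summable (fun n : ℕ => if 1 ≤ n then (((-1 : ℂ) ^ (n + 1) / n) • N ^ n) else 0) ∧
    Summable (fun n : ℕ => if 2 ≤ n then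
      (((-1 : ℂ) ^ (n + 1) / n) • ∑ k ∈ Finset.Ico 1 n, M ^ k * N ^ (n - k)) else 0) := by
  obtain ⟨rM, CM, hrM0, hrM1, hCM, hbM⟩ := aux_geom_bound M hM
  obtain ⟨rN, CN, hrN0, hrN1, hCN, hbN⟩ := aux_geom_bound N hN
  set r := max rM rN with hr
  have hr0 : 0 < r := lt_max_of_lt_left hrM0
  have hr1 : r < 1 := max_lt hrM1 hrN1
  have hbM' : ∀ n : ℕ, ‖M ^ n‖ ≤ CM * r ^ n := by
    intro n
    refine (hbM n).trans ?_
    have h1 : rM ^ n ≤ r ^ n := pow_le_pow_left₀ hrM0.le (le_max_left _ _) n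
    nlinarith
  have hbN' : ∀ n : ℕ, ‖N ^ n‖ ≤ CN * r ^ n := by
    intro n
    refine (hbN n).trans ?_
    have h1 : rN ^ n ≤ r ^ n := pow_le_pow_left₀ hrN0.le (le_max_right _ _) n
    nlinarith
  exact ⟨aux_summable_log M r CM hr0 hr1 hCM hbM',
    aux_summable_log N r CN hr0 hr1 hCN hbN',
    aux_summable_f M N r CM CN hr0 hr1 hCM hCN hbM' hbN'⟩
end aux


lemma aux_telescope {d : ℕ} (M N : Matrix (Fin d) (Fin d) ℂ) (hcomm : M * N = N * M)
    (n : ℕ) (hn : 2 ≤ n) :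
    (M - N) * ∑ k ∈ Finset.Ico 1 n, M ^ k * N ^ (n - k) = M ^ n * N - M * N ^ n := by
  have hc : ∀ k : ℕ, N * M ^ k = M ^ k * N := fun k =>
    ((Commute.pow_right (show Commute N M from hcomm.symm) k)).eq
  set F : ℕ → Matrix (Fin d) (Fin d) ℂ := fun j => M ^ (j + 1) * N ^ (n + 1 - (j + 1)) with hF
  have step : ∀ k ∈ Finset.Ico 1 n, (M - N) * (M ^ k * N ^ (n - k))
      = F k - F (k - 1) := by
    intro k hk
    obtain ⟨hk1, hk2⟩ := Finset.mem_Ico.mp hk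
    have e0 : k - 1 + 1 = k := by omega
    have e1 : n + 1 - (k + 1) = n - k := by omega
    have e2 : n + 1 - k = (n - k) + 1 := by omega
    rw [hF]
    simp only [e0, e1, e2, sub_mul]
    congr 1
    · rw [← mul_assoc, ← pow_succ']
    · rw [← mul_assoc, hc k, mul_assoc, ← pow_succ']
  rw [Finset.mul_sum, Finset.sum_congr rfl step, Finset.sum_Ico_eq_sum_range]
  have hre : ∀ i, F (1 + i) - F (1 + i - 1) = F (i + 1) - F i := by
    intro i
    have a1 : 1 + i = i + 1 := by omega
    rw [a1, Nat.add_sub_cancel]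
  rw [Finset.sum_congr rfl fun i _ => hre i, Finset.sum_range_sub F (n - 1)]
  rw [hF]
  simp only
  rw [show n - 1 + 1 = n from by omega, show n + 1 - n = 1 from by omega,
    show n + 1 - (0 + 1) = n from by omega, pow_one, zero_add, pow_one]


/- STATEMENT 3: for commuting M, N with spectral radius < 1 and M − N invertible,
f(M,N) = (M − N)⁻¹ [ N·log(I + M) − M·log(I + N) ]. -/
theorem fMN_eq_log_formula {d : ℕ}
    (M N : Matrix (Fin d) (Fin d) ℂ)
    (hcomm : M * N = N * M)
    (hM : spectralRadius ℂ M < 1) (hN : spectralRadius ℂ N < 1)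
    (hMN : IsUnit (M - N)) :
    fMN M N = (M - N)⁻¹ * (N * matLog M - M * matLog N) := by
  classical
  obtain ⟨hsM, hsN, hsg⟩ := aux_summables M N hM hN
  set c : ℕ → ℂ := fun n => (-1 : ℂ) ^ (n + 1) / n with hcdef
  set lM : ℕ → Matrix (Fin d) (Fin d) ℂ := fun n => if 1 ≤ n then c n • M ^ n else 0 with hlM
  set lN : ℕ → Matrix (Fin d) (Fin d) ℂ := fun n => if 1 ≤ n then c n • N ^ n else 0 with hlN
  set g : ℕ → Matrix (Fin d) (Fin d) ℂ := fun n => if 2 ≤ n then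
    c n • ∑ k ∈ Finset.Ico 1 n, M ^ k * N ^ (n - k) else 0 with hg
  set tM : ℕ → Matrix (Fin d) (Fin d) ℂ := fun n => if 2 ≤ n then c n • M ^ n else 0 with htM
  set tN : ℕ → Matrix (Fin d) (Fin d) ℂ := fun n => if 2 ≤ n then c n • N ^ n else 0 with htN
  have hc1M : lM 1 = M := by simp [hlM, hcdef]
  have hc1N : lN 1 = N := by simp [hlN, hcdef]
  have htM_eq : ∀ n, tM n = lM n - (if n = 1 then M else 0) := by
    intro n
    rcases Nat.lt_or_ge n 2 with h2 | h2
    · interval_cases n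
      · simp [htM, hlM]
      · simp [htM, ← hc1M]
    · have h1 : 1 ≤ n := by omega
      have hne : n ≠ 1 := by omega
      simp [htM, hlM, h1, h2, hne]
  have htN_eq : ∀ n, tN n = lN n - (if n = 1 then N else 0) := by
    intro n
    rcases Nat.lt_or_ge n 2 with h2 | h2
    · interval_cases n
      · simp [htN, hlN]
      · simp [htN, ← hc1N]
    · have h1 : 1 ≤ n := by omega
      have hne : n ≠ 1 := by omega
      simp [htN, hlN, h1, h2, hne]
  have hstM : Summable tM := by
    rw [funext htM_eq]
    exact hsM.sub (hasSum_ite_eq 1 M).summable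
  have hstN : Summable tN := by
    rw [funext htN_eq]
    exact hsN.sub (hasSum_ite_eq 1 N).summable
  have htsum_tM : ∑' n, tM n = matLog M - M := by
    rw [funext htM_eq, Summable.tsum_sub hsM (hasSum_ite_eq 1 M).summable, tsum_ite_eq]
    rfl
  have htsum_tN : ∑' n, tN n = matLog N - N := by
    rw [funext htN_eq, Summable.tsum_sub hsN (hasSum_ite_eq 1 N).summable, tsum_ite_eq]
    rfl
  have hkey : ∀ n, (M - N) * g n = N * tM n - M * tN n := by
    intro n
    by_cases h2 : 2 ≤ n
    · have hMnN : M ^ n * N = N * M ^ n :=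
        ((Commute.pow_left (show Commute M N from hcomm) n)).eq
      simp only [hg, htM, htN, if_pos h2]
      rw [mul_smul_comm, aux_telescope M N hcomm n h2, smul_sub, hMnN,
        mul_smul_comm, mul_smul_comm]
    · simp only [hg, htM, htN, if_neg h2, mul_zero, sub_zero]
  have hmain : (M - N) * fMN M N = N * matLog M - M * matLog N := by
    have h0 : fMN M N = ∑' n, g n := rfl
    rw [h0, ← hsg.tsum_mul_left (M - N)]
    rw [tsum_congr hkey]
    rw [Summable.tsum_sub (hstM.mul_left N) (hstN.mul_left M),
      (hstM.tsum_mul_left N), (hstN.tsum_mul_left M), htsum_tM, htsum_tN,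
      mul_sub, mul_sub, ← hcomm]
    abel
  have hdet : IsUnit (M - N).det := (Matrix.isUnit_iff_isUnit_det _).mp hMN
  have hinv : (M - N)⁻¹ * (M - N) = 1 := Matrix.nonsing_inv_mul _ hdet
  rw [← hmain, ← mul_assoc, hinv, one_mul]
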